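/- arXiv:1507.06101 — 2 statements merged into one kernel-verified Lean document; each statement's English description precedes it below -/
import Mathlib

section
/- For θ ∈ [0, π/4) and every n ≥ 1, all zeros of L_n(z, F_θ) in ℂ \ {0} lie on the unit circle, in the set {z : |z| = 1, 2θ < |arg z| < π − 2θ}, and each zero is simple. -/
open Matrix Complex Real

noncomputable def S (z : ℂ) (G : Matrix (Fin 2) (Fin 2) ℂ) : Matrix (Fin 2) (Fin 2) ℂ :=
  G * Matrix.diagonal ![z, z⁻¹] * Gᴴ

noncomputable def L (n : ℕ) (z : ℂ) (G : Matrix (Fin 2) (Fin 2) ℂ) : ℂ :=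
  ((S z G) ^ n).trace

noncomputable def Fmat (θ : ℝ) : Matrix (Fin 2) (Fin 2) ℂ :=
  !![(Real.cos θ : ℂ), (Real.sin θ : ℂ); (Real.sin θ : ℂ), (Real.cos θ : ℂ)]

open Polynomial Polynomial.Chebyshev in
section

lemma stmt18_S_eq (c s z : ℂ) (hc : star c = c) (hs : star s = s) :
    S z !![c,s;s,c] = !![c^2*z + s^2*z⁻¹, c*s*z + c*s*z⁻¹; c*s*z + c*s*z⁻¹, s^2*z + c^2*z⁻¹] := by
  have hd : Matrix.diagonal ![z, z⁻¹] = !![z,0;0,z⁻¹] := by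
    ext i j; fin_cases i <;> fin_cases j <;> simp
  have hct : (!![c,s;s,c])ᴴ = !![c,s;s,c] := by
    ext i j; fin_cases i <;> fin_cases j <;> simp [conjTranspose_apply, hc, hs]
  rw [_root_.S, hct, hd, Matrix.mul_fin_two, Matrix.mul_fin_two]
  congr 1 <;> ring

lemma stmt18_sq_gen (c s z : ℂ) (hz : z ≠ 0) (hcs : s^2 = 1 - c^2) :
    (!![c^2*z + s^2*z⁻¹, c*s*z + c*s*z⁻¹; c*s*z + c*s*z⁻¹, s^2*z + c^2*z⁻¹])^2
      = (z + z⁻¹) • (!![c^2*z + s^2*z⁻¹, c*s*z + c*s*z⁻¹; c*s*z + c*s*z⁻¹, s^2*z + c^2*z⁻¹])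
        - ((2*c^2-1)^2) • (1 : Matrix (Fin 2) (Fin 2) ℂ) := by
  have hzz : z * z⁻¹ = 1 := mul_inv_cancel₀ hz
  rw [pow_two, Matrix.mul_fin_two, Matrix.one_fin_two]
  ext i j
  fin_cases i <;> fin_cases j <;> simp [Matrix.smul_apply, smul_eq_mul]
  · linear_combination (norm := ring)
      (z⁻¹*(2*c^2*z + (s^2+1-c^2)*z⁻¹) + c^2*(z+z⁻¹)^2 - (z+z⁻¹)*z⁻¹) * hcs
        + (4*c^2 - 4*c^4 - 1) * hzz
  · linear_combination (norm := ring) (c*s*(z+z⁻¹)^2) * hcs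
  · linear_combination (norm := ring) (c*s*(z+z⁻¹)^2) * hcs
  · linear_combination (norm := ring)
      (z*(s^2*z+(1-c^2)*z+2*c^2*z⁻¹) + c^2*(z+z⁻¹)^2 - (z+z⁻¹)*z) * hcs
        + (4*c^2 - 4*c^4 - 1) * hzz

lemma stmt18_trace_gen (c s z : ℂ) (hcs : s^2 = 1 - c^2) :
    (!![c^2*z + s^2*z⁻¹, c*s*z + c*s*z⁻¹; c*s*z + c*s*z⁻¹, s^2*z + c^2*z⁻¹]).trace = z + z⁻¹ := by
  simp [Matrix.trace, Fin.sum_univ_succ]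
  linear_combination (norm := ring) (z + z⁻¹) * hcs

lemma stmt18_S_Fmat (θ : ℝ) (z : ℂ) :
    S z (Fmat θ) = !![(Real.cos θ:ℂ)^2*z + (Real.sin θ:ℂ)^2*z⁻¹,
        (Real.cos θ:ℂ)*(Real.sin θ:ℂ)*z + (Real.cos θ:ℂ)*(Real.sin θ:ℂ)*z⁻¹;
        (Real.cos θ:ℂ)*(Real.sin θ:ℂ)*z + (Real.cos θ:ℂ)*(Real.sin θ:ℂ)*z⁻¹,
        (Real.sin θ:ℂ)^2*z + (Real.cos θ:ℂ)^2*z⁻¹] :=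
  stmt18_S_eq _ _ _ (by rw [RCLike.star_def, Complex.conj_ofReal])
    (by rw [RCLike.star_def, Complex.conj_ofReal])

lemma stmt18_hcs (θ : ℝ) : (Real.sin θ:ℂ)^2 = 1 - (Real.cos θ:ℂ)^2 := by
  norm_cast; rw [Real.sin_sq]

lemma stmt18_sq_S (θ : ℝ) (z : ℂ) (hz : z ≠ 0) : (S z (Fmat θ))^2 =
    (z + z⁻¹) • (S z (Fmat θ)) - ((Real.cos (2*θ) : ℂ)^2) • 1 := by
  have h2 : (Real.cos (2*θ) : ℂ) = 2 * (Real.cos θ:ℂ)^2 - 1 := by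
    push_cast [Real.cos_two_mul]; ring
  rw [stmt18_S_Fmat, h2]
  exact stmt18_sq_gen _ _ _ hz (stmt18_hcs θ)

lemma stmt18_trace_S (θ : ℝ) (z : ℂ) : (S z (Fmat θ)).trace = z + z⁻¹ := by
  rw [stmt18_S_Fmat]; exact stmt18_trace_gen _ _ _ (stmt18_hcs θ)

lemma stmt18_L_rec (θ : ℝ) (z : ℂ) (hz : z ≠ 0) (n : ℕ) :
    L (n+2) z (Fmat θ) = (z + z⁻¹) * L (n+1) z (Fmat θ)
      - (Real.cos (2*θ) : ℂ)^2 * L n z (Fmat θ) := by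
  have h : (S z (Fmat θ))^(n+2) = (z + z⁻¹) • (S z (Fmat θ))^(n+1)
      - ((Real.cos (2*θ) : ℂ)^2) • (S z (Fmat θ))^n := by
    calc (S z (Fmat θ))^(n+2) = (S z (Fmat θ))^n * (S z (Fmat θ))^2 := pow_add _ n 2
    _ = (S z (Fmat θ))^n * ((z + z⁻¹) • (S z (Fmat θ)) - ((Real.cos (2*θ) : ℂ)^2) • 1) := by
        rw [stmt18_sq_S θ z hz]
    _ = (z + z⁻¹) • (S z (Fmat θ))^(n+1) - ((Real.cos (2*θ) : ℂ)^2) • (S z (Fmat θ))^n := by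
        rw [Matrix.mul_sub, Matrix.mul_smul, Matrix.mul_smul, mul_one, ← pow_succ]
  simp only [L, h, Matrix.trace_sub, Matrix.trace_smul, smul_eq_mul]

lemma stmt18_Lform (θ : ℝ) (z : ℂ) (hz : z ≠ 0) (hc0 : Real.cos (2*θ) ≠ 0) (n : ℕ) :
    L n z (Fmat θ) = 2 * (Real.cos (2*θ) : ℂ)^n
      * (T ℂ n).eval ((z + z⁻¹) / (2 * (Real.cos (2*θ) : ℂ))) := by
  set C : ℂ := (Real.cos (2*θ) : ℂ) with hC
  induction n using Nat.twoStepInduction with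
  | zero => simp [L, Matrix.trace, Fin.sum_univ_succ, T_zero]
  | one =>
      have : L 1 z (Fmat θ) = z + z⁻¹ := by simpa [L] using stmt18_trace_S θ z
      rw [this]
      have h0 : C ≠ 0 := Complex.ofReal_ne_zero.mpr hc0
      rw [Nat.cast_one, T_one, eval_X]
      field_simp
  | more n ih1 ih2 =>
      rw [stmt18_L_rec θ z hz, ih1, ih2]
      have hT : (T ℂ (↑(n+2):ℤ)) = 2 * X * T ℂ (n+1) - T ℂ n := by
        push_cast
        exact T_add_two ℂ n
      have h0 : C ≠ 0 := Complex.ofReal_ne_zero.mpr hc0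
      rw [← hC] at *
      push_cast at hT ⊢
      rw [hT]
      simp only [eval_sub, eval_mul, eval_ofNat, eval_X]
      field_simp
      ring

end

open Polynomial Polynomial.Chebyshev

theorem stmt18 (θ : ℝ) (hθ : θ ∈ Set.Ico (0 : ℝ) (Real.pi / 4)) (n : ℕ) (hn : 1 ≤ n)
    (z₀ : ℂ) (hz₀ : z₀ ≠ 0) (hroot : L n z₀ (Fmat θ) = 0) :
    ‖z₀‖ = 1 ∧ 2 * θ < |Complex.arg z₀| ∧
      |Complex.arg z₀| < Real.pi - 2 * θ ∧
      deriv (fun z : ℂ => L n z (Fmat θ)) z₀ ≠ 0 := by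
  obtain ⟨hθ0, hθ4⟩ := hθ
  have hpi := Real.pi_pos
  -- cos (2θ) is positive
  have h2θ : 2*θ ∈ Set.Ico (0:ℝ) (Real.pi/2) := ⟨by linarith, by linarith⟩
  have hc2 : 0 < Real.cos (2*θ) :=
    Real.cos_pos_of_mem_Ioo ⟨by linarith, h2θ.2⟩
  have hc2' : Real.cos (2*θ) ≠ 0 := ne_of_gt hc2
  have hc21 : Real.cos (2*θ) ≤ 1 := Real.cos_le_one _
  set C : ℂ := (Real.cos (2*θ) : ℂ) with hC
  have hC0 : C ≠ 0 := Complex.ofReal_ne_zero.mpr hc2'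
  set w₀ : ℂ := (z₀ + z₀⁻¹) / (2*C) with hw₀
  -- the Chebyshev value vanishes
  have hTz : (T ℂ n).eval w₀ = 0 := by
    have h := stmt18_Lform θ z₀ hz₀ hc2' n
    rw [hroot, ← hC, ← hw₀] at h
    have h2 : (2:ℂ) * C^n ≠ 0 := by simp [hC0]
    exact (mul_eq_zero.mp h.symm).resolve_left h2
  -- find the root structure
  obtain ⟨x, hx⟩ := Complex.cos_surjective w₀
  have hcosnx : Complex.cos ((n:ℂ) * x) = 0 := by
    have := T_complex_cos x n
    rw [hx, hTz] at this
    simpa using this.symm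
  obtain ⟨k, hk⟩ := Complex.cos_eq_zero_iff.mp hcosnx
  have hn0 : (n:ℂ) ≠ 0 := Nat.cast_ne_zero.mpr (by omega)
  have hn0' : (n:ℝ) ≠ 0 := Nat.cast_ne_zero.mpr (by omega)
  set α : ℝ := (2*k+1) * Real.pi / (2*n) with hα
  have hxα : x = (α : ℂ) := by
    have : x = (2*k+1) * (Real.pi:ℂ) / 2 / n := by
      field_simp at hk ⊢
      linear_combination hk
    rw [this, hα]
    push_cast
    field_simp
    try ring
  have hnα : (n:ℝ) * α = (2*k+1) * Real.pi / 2 := by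
    rw [hα]; field_simp
  -- sin α ≠ 0
  have hsinα : Real.sin α ≠ 0 := by
    intro h
    obtain ⟨m, hm⟩ := Real.sin_eq_zero_iff.mp h
    have hcos : Real.cos ((n:ℝ) * α) = 0 := by
      rw [hnα]
      exact Real.cos_eq_zero_iff.mpr ⟨k, by push_cast; ring⟩
    rw [← hm] at hcos
    have h1 : (n:ℝ) * (m * Real.pi) = ((n*m : ℤ) : ℝ) * Real.pi := by push_cast; ring
    rw [h1] at hcos
    have := Real.abs_cos_int_mul_pi (n*m : ℤ)
    rw [hcos] at this
    norm_num at this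
  -- |cos α| < 1
  have hcosα : |Real.cos α| < 1 := by
    have h1 : Real.sin α ^ 2 + Real.cos α ^ 2 = 1 := Real.sin_sq_add_cos_sq α
    have h2 : 0 < Real.sin α ^ 2 := by positivity
    have : Real.cos α ^ 2 < 1 := by nlinarith
    exact (sq_lt_one_iff_abs_lt_one _).mp this
  -- w₀ is real
  have hw₀α : w₀ = ((Real.cos α : ℝ) : ℂ) := by rw [← hx, hxα, Complex.ofReal_cos]
  set a : ℝ := Real.cos (2*θ) * Real.cos α with ha
  have hza : z₀ + z₀⁻¹ = 2*(a:ℂ) := by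
    have h1 : w₀ * (2*C) = z₀ + z₀⁻¹ := by
      rw [hw₀]; field_simp
    rw [← h1, hw₀α, hC, ha]
    push_cast
    ring
  have haa : |a| < Real.cos (2*θ) := by
    rw [ha, abs_mul, abs_of_pos hc2]
    calc Real.cos (2*θ) * |Real.cos α| < Real.cos (2*θ) * 1 :=
          mul_lt_mul_of_pos_left hcosα hc2
    _ = Real.cos (2*θ) := mul_one _
  have ha1 : |a| < 1 := lt_of_lt_of_le haa hc21
  have ha2 : a^2 < 1 := (sq_lt_one_iff_abs_lt_one a).mpr ha1
  have hzz : z₀ * z₀⁻¹ = 1 := mul_inv_cancel₀ hz₀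
  have hquad : z₀^2 - 2*(a:ℂ)*z₀ + 1 = 0 := by linear_combination z₀ * hza - hzz
  set u : ℂ := (starRingEnd ℂ) z₀ with hu
  have hquad' : u^2 - 2*(a:ℂ)*u + 1 = 0 := by
    have h := congrArg (starRingEnd ℂ) hquad
    simpa [hu, Complex.conj_ofReal, map_ofNat] using h
  have hne : z₀ ≠ u := by
    intro h
    have hre : z₀ = (z₀.re : ℂ) := (Complex.conj_eq_iff_re.mp h.symm).symm
    set r := z₀.re with hr
    have hrc : (r:ℂ)^2 - 2*(a:ℂ)*(r:ℂ) + 1 = 0 := by rw [← hre]; exact hquad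
    have hrr : r^2 - 2*a*r + 1 = 0 := by exact_mod_cast hrc
    nlinarith [sq_nonneg (r - a)]
  have hsum : z₀ + u = 2*(a:ℂ) := by
    have hfac : (z₀ - u) * (z₀ + u - 2*(a:ℂ)) = 0 := by linear_combination hquad - hquad'
    rcases mul_eq_zero.mp hfac with h | h
    · exact absurd (sub_eq_zero.mp h) hne
    · linear_combination h
  have hprod : z₀ * u = 1 := by linear_combination z₀ * hsum - hquad
  have habs : ‖z₀‖ = 1 := by
    have hns : Complex.normSq z₀ = 1 := by
      have h := Complex.mul_conj z₀
      rw [← hu, hprod] at h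
      exact_mod_cast h.symm
    rw [Complex.norm_def, hns, Real.sqrt_one]
  have hrea : z₀.re = a := by
    have h := Complex.add_conj z₀
    rw [← hu, hsum] at h
    have h2' : (2:ℝ) * z₀.re = 2*a := by exact_mod_cast h.symm
    linarith
  have hcosarg : Real.cos (Complex.arg z₀) = a := by
    rw [Complex.cos_arg hz₀, habs, hrea, div_one]
  set φ := Complex.arg z₀ with hφ
  have hφπ : |φ| ≤ Real.pi := Complex.abs_arg_le_pi z₀
  have hcosφ : Real.cos |φ| = a := by rw [Real.cos_abs]; exact hcosarg
  have harg1 : 2*θ < |φ| := by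
    by_contra h
    push_neg at h
    have hle : Real.cos (2*θ) ≤ Real.cos |φ| :=
      Real.cos_le_cos_of_nonneg_of_le_pi (abs_nonneg φ) (by linarith) h
    have := le_abs_self a
    linarith
  have harg2 : |φ| < Real.pi - 2*θ := by
    by_contra h
    push_neg at h
    have hle : Real.cos |φ| ≤ Real.cos (Real.pi - 2*θ) :=
      Real.cos_le_cos_of_nonneg_of_le_pi (by linarith) hφπ h
    rw [Real.cos_pi_sub] at hle
    have := neg_abs_le a
    linarith
  -- derivative
  have hsinnα : Real.sin ((n:ℝ) * α) ≠ 0 := by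
    intro h
    obtain ⟨m, hm⟩ := Real.sin_eq_zero_iff.mp h
    rw [hnα] at hm
    have h2 : (2*m : ℝ) * Real.pi = (2*k+1) * Real.pi := by linarith
    have h3 : (2*m : ℝ) = (2*k+1 : ℝ) := mul_right_cancel₀ (ne_of_gt hpi) h2
    have h4 : (2*m : ℤ) = 2*k+1 := by exact_mod_cast h3
    omega
  have hU : (Polynomial.Chebyshev.U ℂ ((n:ℤ)-1)).eval w₀ ≠ 0 := by
    have hs := Polynomial.Chebyshev.U_complex_cos x ((n:ℤ)-1)
    rw [hx] at hs
    have he : (((n:ℤ)-1 : ℤ) : ℂ) + 1 = (n:ℂ) := by push_cast; ring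
    rw [he, hxα] at hs
    have hsx : Complex.sin ((α:ℝ):ℂ) ≠ 0 := by
      rw [← Complex.ofReal_sin]
      exact_mod_cast Complex.ofReal_ne_zero.mpr hsinα
    have hsnx : Complex.sin ((n:ℂ) * ((α:ℝ):ℂ)) ≠ 0 := by
      have : (n:ℂ) * ((α:ℝ):ℂ) = (((n:ℝ) * α : ℝ):ℂ) := by push_cast; ring
      rw [this, ← Complex.ofReal_sin]
      exact Complex.ofReal_ne_zero.mpr hsinnα
    intro h0
    rw [h0, zero_mul] at hs
    exact hsnx hs.symm
  have hTd : (Polynomial.derivative (Polynomial.Chebyshev.T ℂ (n:ℤ))).eval w₀ ≠ 0 := by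
    rw [Polynomial.Chebyshev.T_derivative_eq_U]
    simp only [Polynomial.eval_mul, Polynomial.eval_intCast]
    exact mul_ne_zero (by exact_mod_cast hn0) hU
  have hder : deriv (fun z : ℂ => L n z (Fmat θ)) z₀ ≠ 0 := by
    have hev : (fun z : ℂ => L n z (Fmat θ)) =ᶠ[nhds z₀]
        (fun z : ℂ => 2 * C^n * (Polynomial.Chebyshev.T ℂ n).eval ((z + z⁻¹)/(2*C))) := by
      filter_upwards [eventually_ne_nhds hz₀] with z hz
      rw [stmt18_Lform θ z hz hc2' n, ← hC]
    rw [hev.deriv_eq]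
    have hg : HasDerivAt (fun z : ℂ => (z + z⁻¹)/(2*C)) ((1 + -(z₀^2)⁻¹)/(2*C)) z₀ :=
      ((hasDerivAt_id z₀).add (hasDerivAt_inv hz₀)).div_const _
    have hp : HasDerivAt (fun w : ℂ => (Polynomial.Chebyshev.T ℂ n).eval w)
        ((Polynomial.derivative (Polynomial.Chebyshev.T ℂ (n:ℤ))).eval w₀) w₀ :=
      Polynomial.hasDerivAt _ _
    have hcomp := (HasDerivAt.comp z₀ (by rw [hw₀] at hp; exact hp) hg).const_mul ((2:ℂ) * C^n)
    have hD : HasDerivAt (fun z : ℂ => 2 * C^n * (Polynomial.Chebyshev.T ℂ n).eval ((z + z⁻¹)/(2*C)))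
        (2 * C^n * ((Polynomial.derivative (Polynomial.Chebyshev.T ℂ (n:ℤ))).eval w₀
          * ((1 + -(z₀^2)⁻¹)/(2*C)))) z₀ := by
      simpa [Function.comp] using hcomp
    rw [hD.deriv]
    have hz2 : (1 : ℂ) + -(z₀^2)⁻¹ ≠ 0 := by
      intro h
      have hz2' : z₀^2 = 1 := by
        have h1 : (z₀^2)⁻¹ = 1 := by linear_combination -h
        exact inv_eq_one.mp h1
      have huz : z₀ = u := by
        have : z₀ * u = z₀ * z₀ := by rw [hprod, ← pow_two, hz2']
        exact mul_left_cancel₀ hz₀ this.symm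
      exact hne huz
    exact mul_ne_zero (mul_ne_zero two_ne_zero (pow_ne_zero _ hC0))
      (mul_ne_zero hTd (div_ne_zero hz2 (by simp [hC0])))
  exact ⟨habs, harg1, harg2, hder⟩
end

section
/- If triples (R₁, ρ₁, θ₁) and (R₂, ρ₂, θ₂) with Rᵢ, ρᵢ > 0 and θᵢ ∈ [0, π/4] satisfy R₁^n L_n(ρ₁ z, F_{θ₁}) = R₂^n L_n(ρ₂ z, F_{θ₂}) for all z ∈ ℂ \ {0} and some fixed n ≥ 2, then R₁ = R₂, ρ₁ = ρ₂, and θ₁ = θ₂. -/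
open Matrix Complex Real

lemma sq2 (M : Matrix (Fin 2) (Fin 2) ℂ) :
    M ^ 2 = M.trace • M - M.det • (1 : Matrix (Fin 2) (Fin 2) ℂ) := by
  ext i j
  rw [pow_two]
  fin_cases i <;> fin_cases j <;>
    simp [Matrix.mul_apply, Fin.sum_univ_two, Matrix.trace_fin_two, Matrix.det_fin_two,
      Matrix.one_apply] <;> ring

lemma FmatH (θ : ℝ) : (Fmat θ)ᴴ = Fmat θ := by
  ext i j
  fin_cases i <;> fin_cases j <;>
    simp [Fmat, Matrix.conjTranspose_apply, Complex.conj_ofReal, -Complex.ofReal_cos,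
      -Complex.ofReal_sin]

lemma pyth (θ : ℝ) : (Real.sin θ : ℂ) ^ 2 + (Real.cos θ : ℂ) ^ 2 = 1 := by
  norm_cast
  exact_mod_cast Real.sin_sq_add_cos_sq θ

lemma S_entries (z : ℂ) (θ : ℝ) :
    S z (Fmat θ) = !![z * (Real.cos θ:ℂ)^2 + z⁻¹ * (Real.sin θ:ℂ)^2,
      (z + z⁻¹) * (Real.cos θ:ℂ) * (Real.sin θ:ℂ);
      (z + z⁻¹) * (Real.cos θ:ℂ) * (Real.sin θ:ℂ),
      z * (Real.sin θ:ℂ)^2 + z⁻¹ * (Real.cos θ:ℂ)^2] := by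
  have hd : Matrix.diagonal ![z, z⁻¹] = !![z, 0; 0, z⁻¹] := by
    ext i j
    fin_cases i <;> fin_cases j <;> simp [Matrix.diagonal]
  rw [S, FmatH, hd, Fmat, Matrix.mul_fin_two, Matrix.mul_fin_two]
  congr 1 <;> ring

lemma trace_S (z : ℂ) (θ : ℝ) : (S z (Fmat θ)).trace = z + z⁻¹ := by
  rw [S_entries, Matrix.trace_fin_two_of]
  linear_combination (z + z⁻¹) * pyth θ

lemma det_S (z : ℂ) (hz : z ≠ 0) (θ : ℝ) :
    (S z (Fmat θ)).det = ((Real.cos (2 * θ) : ℝ) : ℂ) ^ 2 := by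
  rw [S_entries, Matrix.det_fin_two_of]
  have h2 : ((Real.cos (2 * θ) : ℝ) : ℂ) = (Real.cos θ:ℂ)^2 - (Real.sin θ:ℂ)^2 := by
    rw [Real.cos_two_mul']
    push_cast
    ring
  rw [h2]
  field_simp
  ring

lemma S_sq (z : ℂ) (θ : ℝ) (hz : z ≠ 0) :
    S z (Fmat θ) ^ 2 = (z + z⁻¹) • S z (Fmat θ)
      - (((Real.cos (2 * θ) : ℝ) : ℂ) ^ 2) • (1 : Matrix (Fin 2) (Fin 2) ℂ) := by
  rw [sq2, trace_S, det_S z hz]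

lemma L_rec (z : ℂ) (θ : ℝ) (hz : z ≠ 0) (k : ℕ) :
    L (k + 2) z (Fmat θ) = (z + z⁻¹) * L (k + 1) z (Fmat θ)
      - ((Real.cos (2 * θ) : ℝ) : ℂ) ^ 2 * L k z (Fmat θ) := by
  have h : S z (Fmat θ) ^ (k + 2)
      = (z + z⁻¹) • S z (Fmat θ) ^ (k + 1)
        - (((Real.cos (2 * θ) : ℝ) : ℂ) ^ 2) • S z (Fmat θ) ^ k := by
    have : S z (Fmat θ) ^ (k + 2) = S z (Fmat θ) ^ k * S z (Fmat θ) ^ 2 := by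
      rw [← pow_add]
    rw [this, S_sq z θ hz, Matrix.mul_sub, Matrix.mul_smul, Matrix.mul_smul, mul_one,
      ← pow_succ]
  simp only [L, h, Matrix.trace_sub, Matrix.trace_smul, smul_eq_mul]

open Polynomial in
noncomputable def Qp (d : ℂ) : ℕ → Polynomial ℂ
  | 0 => 2
  | 1 => X ^ 2 + 1
  | (k + 2) => (X ^ 2 + 1) * Qp d (k + 1) - C d * X ^ 2 * Qp d k

lemma L_zero (z : ℂ) (θ : ℝ) : L 0 z (Fmat θ) = 2 := by
  simp [L, Matrix.trace_one]

lemma L_one (z : ℂ) (θ : ℝ) : L 1 z (Fmat θ) = z + z⁻¹ := by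
  simp [L, trace_S]

open Polynomial in
lemma Qp_eval (θ : ℝ) (z : ℂ) (hz : z ≠ 0) :
    ∀ k, (Qp (((Real.cos (2 * θ) : ℝ) : ℂ) ^ 2) k).eval z = z ^ k * L k z (Fmat θ) := by
  intro k
  induction k using Nat.strong_induction_on with
  | _ k ih =>
    match k with
    | 0 => simp [Qp, L_zero]
    | 1 => simp [Qp, L_one]; field_simp
    | (k + 2) =>
      rw [Qp, L_rec z θ hz k]
      simp only [eval_sub, eval_mul, eval_add, eval_pow, eval_X, eval_one, eval_C,
        ih (k+1) (by omega), ih k (by omega)]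
      field_simp
      ring

open Polynomial in
lemma Qp_coeff_zero (d : ℂ) : ∀ k, 1 ≤ k → (Qp d k).coeff 0 = 1 := by
  intro k
  induction k using Nat.strong_induction_on with
  | _ k ih =>
    match k with
    | 0 => omega
    | 1 => intro _; simp [Qp]
    | (k + 2) =>
      intro _
      rw [Qp, coeff_zero_eq_eval_zero] at *
      simp only [eval_sub, eval_mul, eval_add, eval_pow, eval_X, eval_one, eval_C]
      have h1 : (Qp d (k+1)).eval 0 = 1 := by
        rw [← coeff_zero_eq_eval_zero]; exact ih (k+1) (by omega) (by omega)
      rw [h1]; ring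

open Polynomial in
lemma Qp_deg_top (d : ℂ) :
    ∀ k, (Qp d k).natDegree ≤ 2 * k ∧ (Qp d k).coeff (2 * k) = (if k = 0 then 2 else 1) := by
  intro k
  induction k using Nat.strong_induction_on with
  | _ k ih =>
    match k with
    | 0 => simp [Qp]
    | 1 =>
      constructor
      · rw [Qp]
        apply le_trans (natDegree_add_le _ _)
        simp
      · rw [Qp]; simp [coeff_add, coeff_X_pow, coeff_one]
    | (k + 2) =>
      obtain ⟨hd1, hc1⟩ := ih (k+1) (by omega)
      obtain ⟨hd0, hc0⟩ := ih k (by omega)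
      constructor
      · rw [Qp]
        apply le_trans (natDegree_sub_le _ _)
        apply max_le
        · apply le_trans (natDegree_mul_le)
          have : (X ^ 2 + 1 : Polynomial ℂ).natDegree ≤ 2 := by
            apply le_trans (natDegree_add_le _ _); simp
          omega
        · apply le_trans (natDegree_mul_le)
          have h2 : (C d * X ^ 2 : Polynomial ℂ).natDegree ≤ 2 := by
            apply le_trans (natDegree_mul_le)
            simp
          omega
      · rw [Qp]
        have e1 : (2 : ℕ) * (k + 2) = (2 * (k + 1)) + 2 := by ring
        rw [coeff_sub, add_mul, one_mul, coeff_add, e1, coeff_X_pow_mul]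
        have z1 : (Qp d (k+1)).coeff (2 * (k+1) + 2) = 0 :=
          coeff_eq_zero_of_natDegree_lt (by omega)
        have z0 : (Qp d k).coeff (2 * (k+1)) = 0 :=
          coeff_eq_zero_of_natDegree_lt (by omega)
        rw [z1, mul_assoc, coeff_C_mul]
        have e2 : (2 : ℕ) * (k + 1) + 2 = (2 * (k + 1)) + 2 := rfl
        rw [show (2 * (k + 1) + 2 : ℕ) = 2 * (k+1) + 2 from rfl, coeff_X_pow_mul, z0]
        rw [hc1]
        simp

open Polynomial in
lemma coeff_comp_CX (p : Polynomial ℂ) (r : ℂ) (j : ℕ) :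
    (p.comp (C r * X)).coeff j = r ^ j * p.coeff j := by
  induction p using Polynomial.induction_on' with
  | add p q hp hq => simp [add_comp, coeff_add, hp, hq, mul_add]
  | monomial m a =>
    rw [monomial_comp, mul_pow, ← C_pow, ← mul_assoc, ← C_mul, coeff_C_mul, coeff_X_pow,
      coeff_monomial]
    by_cases h : m = j
    · subst h; simp; ring
    · simp [h, Ne.symm h]

lemma pow_inj_pos {a b : ℝ} (ha : 0 < a) (hb : 0 < b) {n : ℕ} (hn : n ≠ 0)
    (h : a ^ n = b ^ n) : a = b := by
  rcases lt_trichotomy a b with hl | he | hl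
  · exact absurd h (ne_of_lt (pow_lt_pow_left₀ hl ha.le hn))
  · exact he
  · exact absurd h.symm (ne_of_lt (pow_lt_pow_left₀ hl hb.le hn))

lemma mat_pow (t : ℂ) (k : ℕ) :
    (!![1, t; t, 1] : Matrix (Fin 2) (Fin 2) ℂ) ^ k
      = !![((1+t)^k + (1-t)^k)/2, ((1+t)^k - (1-t)^k)/2;
          ((1+t)^k - (1-t)^k)/2, ((1+t)^k + (1-t)^k)/2] := by
  induction k with
  | zero => simp [Matrix.one_fin_two]
  | succ k ih =>
    rw [pow_succ, ih, Matrix.mul_fin_two]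
    congr 1 <;> ring

lemma L_at_one (n : ℕ) (θ : ℝ) :
    L n 1 (Fmat θ) = ((1 + Real.sin (2*θ) : ℝ) : ℂ) ^ n + ((1 - Real.sin (2*θ) : ℝ) : ℂ) ^ n := by
  have hS : S 1 (Fmat θ) = !![1, ((Real.sin (2*θ) : ℝ) : ℂ); ((Real.sin (2*θ) : ℝ) : ℂ), 1] := by
    rw [S_entries]
    have hs : ((Real.sin (2*θ) : ℝ) : ℂ) = 2 * (Real.sin θ : ℂ) * (Real.cos θ : ℂ) := by
      rw [Real.sin_two_mul]; push_cast; ring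
    have e00 : (1:ℂ) * (Real.cos θ:ℂ)^2 + 1⁻¹ * (Real.sin θ:ℂ)^2 = 1 := by
      rw [inv_one]; linear_combination pyth θ
    have e11 : (1:ℂ) * (Real.sin θ:ℂ)^2 + 1⁻¹ * (Real.cos θ:ℂ)^2 = 1 := by
      rw [inv_one]; linear_combination pyth θ
    have e01 : ((1:ℂ) + 1⁻¹) * (Real.cos θ:ℂ) * (Real.sin θ:ℂ) = ((Real.sin (2*θ) : ℝ) : ℂ) := by
      rw [inv_one]; linear_combination -hs
    rw [e00, e11, e01]
  rw [L, hS, mat_pow, Matrix.trace_fin_two_of]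
  push_cast
  ring

lemma g_strictMono {n : ℕ} (hn : 2 ≤ n) :
    StrictMonoOn (fun t : ℝ => (1+t)^n + (1-t)^n) (Set.Icc 0 1) := by
  apply strictMonoOn_of_deriv_pos (convex_Icc 0 1)
  · fun_prop
  · intro t ht
    rw [interior_Icc, Set.mem_Ioo] at ht
    have h1 : HasDerivAt (fun t : ℝ => (1+t)^n) ((n : ℝ) * (1+t)^(n-1) * 1) t := by
      exact (HasDerivAt.const_add 1 (hasDerivAt_id t)).pow n
    have h2 : HasDerivAt (fun t : ℝ => (1-t)^n) ((n : ℝ) * (1-t)^(n-1) * (-1)) t := by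
      exact (HasDerivAt.const_sub 1 (hasDerivAt_id t)).pow n
    rw [show (fun t : ℝ => (1+t)^n + (1-t)^n) = (fun t : ℝ => (1+t)^n) + (fun t : ℝ => (1-t)^n) from rfl, (h1.add h2).deriv]
    have hlt : (1-t)^(n-1) < (1+t)^(n-1) :=
      pow_lt_pow_left₀ (by linarith) (by linarith) (by omega)
    have hnpos : (0:ℝ) < n := by positivity
    nlinarith

open Polynomial in
theorem stmt19 (R₁ R₂ ρ₁ ρ₂ : ℝ) (hR₁ : 0 < R₁) (hR₂ : 0 < R₂)
    (hρ₁ : 0 < ρ₁) (hρ₂ : 0 < ρ₂) (θ₁ θ₂ : ℝ)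
    (hθ₁ : θ₁ ∈ Set.Icc (0 : ℝ) (Real.pi / 4))
    (hθ₂ : θ₂ ∈ Set.Icc (0 : ℝ) (Real.pi / 4)) (n : ℕ) (hn : 2 ≤ n)
    (heq : ∀ z : ℂ, z ≠ 0 →
      (R₁ : ℂ) ^ n * L n ((ρ₁ : ℂ) * z) (Fmat θ₁) =
      (R₂ : ℂ) ^ n * L n ((ρ₂ : ℂ) * z) (Fmat θ₂)) :
    R₁ = R₂ ∧ ρ₁ = ρ₂ ∧ θ₁ = θ₂ := by
  have hn0 : n ≠ 0 := by omega
  have hρ₁' : ((ρ₁ : ℝ) : ℂ) ≠ 0 := by exact_mod_cast hρ₁.ne'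
  have hρ₂' : ((ρ₂ : ℝ) : ℂ) ≠ 0 := by exact_mod_cast hρ₂.ne'
  set d₁ : ℂ := ((Real.cos (2 * θ₁) : ℝ) : ℂ) ^ 2 with hd₁
  set d₂ : ℂ := ((Real.cos (2 * θ₂) : ℝ) : ℂ) ^ 2 with hd₂
  set P₁ : Polynomial ℂ :=
    C ((R₁ : ℂ) ^ n * ((ρ₁ : ℂ)⁻¹) ^ n) * (Qp d₁ n).comp (C (ρ₁ : ℂ) * X) with hP₁
  set P₂ : Polynomial ℂ :=
    C ((R₂ : ℂ) ^ n * ((ρ₂ : ℂ)⁻¹) ^ n) * (Qp d₂ n).comp (C (ρ₂ : ℂ) * X) with hP₂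
  have hev : ∀ z : ℂ, z ≠ 0 → P₁.eval z = P₂.eval z := by
    intro z hz
    rw [hP₁, hP₂]
    simp only [eval_mul, eval_C, eval_comp, eval_mul, eval_C, eval_X]
    rw [Qp_eval θ₁ _ (mul_ne_zero hρ₁' hz) n, Qp_eval θ₂ _ (mul_ne_zero hρ₂' hz) n]
    have h1 : (R₁:ℂ)^n * ((ρ₁:ℂ)⁻¹)^n * (((ρ₁:ℂ)*z)^n * L n ((ρ₁:ℂ)*z) (Fmat θ₁))
        = z^n * ((R₁:ℂ)^n * L n ((ρ₁:ℂ)*z) (Fmat θ₁)) := by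
      field_simp
      have hc : (ρ₁:ℂ)^n * ((ρ₁:ℂ)⁻¹)^n = 1 := by rw [← mul_pow, mul_inv_cancel₀ hρ₁', one_pow]
      linear_combination ((R₁:ℂ)^n * z^n * L n ((ρ₁:ℂ)*z) (Fmat θ₁)) * hc
    have h2 : (R₂:ℂ)^n * ((ρ₂:ℂ)⁻¹)^n * (((ρ₂:ℂ)*z)^n * L n ((ρ₂:ℂ)*z) (Fmat θ₂))
        = z^n * ((R₂:ℂ)^n * L n ((ρ₂:ℂ)*z) (Fmat θ₂)) := by
      field_simp
      have hc : (ρ₂:ℂ)^n * ((ρ₂:ℂ)⁻¹)^n = 1 := by rw [← mul_pow, mul_inv_cancel₀ hρ₂', one_pow]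
      linear_combination ((R₂:ℂ)^n * z^n * L n ((ρ₂:ℂ)*z) (Fmat θ₂)) * hc
    rw [h1, h2, heq z hz]
  have hP : P₁ = P₂ := by
    apply Polynomial.eq_of_infinite_eval_eq
    exact ((Set.finite_singleton (0:ℂ)).infinite_compl).mono (fun z hz => hev z hz)
  have hcoeff : ∀ j : ℕ,
      (R₁:ℂ)^n * ((ρ₁:ℂ)⁻¹)^n * ((ρ₁:ℂ)^j * (Qp d₁ n).coeff j)
        = (R₂:ℂ)^n * ((ρ₂:ℂ)⁻¹)^n * ((ρ₂:ℂ)^j * (Qp d₂ n).coeff j) := by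
    intro j
    have := congrArg (fun p : Polynomial ℂ => p.coeff j) hP
    simpa only [hP₁, hP₂, coeff_C_mul, coeff_comp_CX] using this
  have hQtop : ∀ d : ℂ, (Qp d n).coeff (2 * n) = 1 := by
    intro d
    have := (Qp_deg_top d n).2
    rwa [if_neg hn0] at this
  have hQ0 : ∀ d : ℂ, (Qp d n).coeff 0 = 1 := fun d => Qp_coeff_zero d n (by omega)
  -- top coefficient : (R₁ ρ₁)^n = (R₂ ρ₂)^n
  have htopC : ((R₁ * ρ₁ : ℝ) : ℂ) ^ n = ((R₂ * ρ₂ : ℝ) : ℂ) ^ n := by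
    have h := hcoeff (2 * n)
    rw [hQtop d₁, hQtop d₂, mul_one, mul_one] at h
    have e1 : (R₁:ℂ)^n * ((ρ₁:ℂ)⁻¹)^n * (ρ₁:ℂ)^(2*n) = ((R₁ * ρ₁ : ℝ) : ℂ)^n := by
      push_cast
      rw [two_mul, pow_add, mul_pow]
      field_simp
      have hc : (ρ₁:ℂ)^n * ((ρ₁:ℂ)⁻¹)^n = 1 := by rw [← mul_pow, mul_inv_cancel₀ hρ₁', one_pow]
      linear_combination ((R₁:ℂ)^n) * hc
    have e2 : (R₂:ℂ)^n * ((ρ₂:ℂ)⁻¹)^n * (ρ₂:ℂ)^(2*n) = ((R₂ * ρ₂ : ℝ) : ℂ)^n := by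
      push_cast
      rw [two_mul, pow_add, mul_pow]
      field_simp
      have hc : (ρ₂:ℂ)^n * ((ρ₂:ℂ)⁻¹)^n = 1 := by rw [← mul_pow, mul_inv_cancel₀ hρ₂', one_pow]
      linear_combination ((R₂:ℂ)^n) * hc
    rw [e1, e2] at h
    exact h
  have hbotC : ((R₁ / ρ₁ : ℝ) : ℂ) ^ n = ((R₂ / ρ₂ : ℝ) : ℂ) ^ n := by
    have h := hcoeff 0
    simp only [hQ0, pow_zero, mul_one] at h
    have e1 : (R₁:ℂ)^n * ((ρ₁:ℂ)⁻¹)^n = ((R₁ / ρ₁ : ℝ) : ℂ)^n := by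
      push_cast
      rw [div_pow]
      simp [div_eq_mul_inv]
    have e2 : (R₂:ℂ)^n * ((ρ₂:ℂ)⁻¹)^n = ((R₂ / ρ₂ : ℝ) : ℂ)^n := by
      push_cast
      rw [div_pow]
      simp [div_eq_mul_inv]
    rw [e1, e2] at h
    exact h
  have htop : R₁ * ρ₁ = R₂ * ρ₂ := by
    apply pow_inj_pos (by positivity) (by positivity) hn0
    exact_mod_cast htopC
  have hbot : R₁ / ρ₁ = R₂ / ρ₂ := by
    apply pow_inj_pos (by positivity) (by positivity) hn0
    exact_mod_cast hbotC
  have hRR : R₁ = R₂ := by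
    have hb' : R₁ * ρ₂ = R₂ * ρ₁ := by
      field_simp at hbot
      linarith [hbot]
    have hsq : R₁ ^ 2 * (ρ₁ * ρ₂) = R₂ ^ 2 * (ρ₁ * ρ₂) := by
      linear_combination R₁ * ρ₂ * htop + R₂ * ρ₂ * hb'
    exact pow_inj_pos hR₁ hR₂ two_ne_zero (mul_right_cancel₀ (by positivity) hsq)
  have hρρ : ρ₁ = ρ₂ := by
    rw [hRR] at htop
    exact mul_left_cancel₀ hR₂.ne' htop
  refine ⟨hRR, hρρ, ?_⟩
  -- now the angles
  have hL1 : L n 1 (Fmat θ₁) = L n 1 (Fmat θ₂) := by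
    have h := heq ((ρ₁ : ℂ))⁻¹ (inv_ne_zero hρ₁')
    rw [mul_inv_cancel₀ hρ₁'] at h
    rw [← hRR, ← hρρ, mul_inv_cancel₀ hρ₁'] at h
    exact mul_left_cancel₀
      (pow_ne_zero n (show ((R₁:ℝ):ℂ) ≠ 0 by exact_mod_cast hR₁.ne')) h
  rw [L_at_one, L_at_one] at hL1
  have hreal : (1 + Real.sin (2*θ₁))^n + (1 - Real.sin (2*θ₁))^n
      = (1 + Real.sin (2*θ₂))^n + (1 - Real.sin (2*θ₂))^n := by exact_mod_cast hL1
  have hpi := Real.pi_pos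
  have m₁ : Real.sin (2*θ₁) ∈ Set.Icc (0:ℝ) 1 :=
    ⟨Real.sin_nonneg_of_nonneg_of_le_pi (by linarith [hθ₁.1]) (by linarith [hθ₁.2]),
      Real.sin_le_one _⟩
  have m₂ : Real.sin (2*θ₂) ∈ Set.Icc (0:ℝ) 1 :=
    ⟨Real.sin_nonneg_of_nonneg_of_le_pi (by linarith [hθ₂.1]) (by linarith [hθ₂.2]),
      Real.sin_le_one _⟩
  have ht : Real.sin (2*θ₁) = Real.sin (2*θ₂) := (g_strictMono hn).injOn m₁ m₂ hreal
  have h2θ : 2*θ₁ = 2*θ₂ := Real.injOn_sin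
    ⟨by linarith [hθ₁.1], by linarith [hθ₁.2]⟩
    ⟨by linarith [hθ₂.1], by linarith [hθ₂.2]⟩ ht
  linarith
end
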